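/- For n ≥ 18, the spectral radius of the graph K_n \ E(S_{n−4} ∪ S_4) is strictly less than the spectral radius of K_n \ E(S_{n−3}). -/

import Mathlib

/-- `K_n \ E(S_{n-3})`: the complete graph on `n` vertices minus the edges of a star
`S_{n-3}` with center `0` and leaves `1, …, n-4`. -/
def KnDelS (n : ℕ) : SimpleGraph (Fin n) :=
  ⊤ \ SimpleGraph.fromRel (fun u v => u.val = 0 ∧ 1 ≤ v.val ∧ v.val ≤ n - 4)

/-- `K_n \ E(S_{n-4} ∪ S_4)`: the complete graph on `n` vertices minus the edges of a star
`S_{n-4}` (center `0`, leaves `1, …, n-5`) and of a disjoint star `S_4` (center `n-4`,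
leaves `n-3, n-2, n-1`). -/
def KnDelSS (n : ℕ) : SimpleGraph (Fin n) :=
  ⊤ \ SimpleGraph.fromRel (fun u v =>
    (u.val = 0 ∧ 1 ≤ v.val ∧ v.val ≤ n - 5) ∨ (u.val = n - 4 ∧ n - 3 ≤ v.val))

/-- `K_n \ E(S_{n-4} ∪ K_3)`: the complete graph on `n` vertices minus the edges of a star
`S_{n-4}` (center `0`, leaves `1, …, n-5`) and of a disjoint triangle `K_3` on
`{n-3, n-2, n-1}`. -/
def KnDelSK (n : ℕ) : SimpleGraph (Fin n) :=
  ⊤ \ SimpleGraph.fromRel (fun u v =>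
    (u.val = 0 ∧ 1 ≤ v.val ∧ v.val ≤ n - 5) ∨ (n - 3 ≤ u.val ∧ n - 3 ≤ v.val))

/-- The spectral radius of a finite graph: the largest (real) eigenvalue of its
adjacency matrix, expressed as the supremum of the real spectrum. -/
noncomputable def specRad {V : Type*} [Fintype V] [DecidableEq V] (G : SimpleGraph V) : ℝ :=
  letI := Classical.decRel G.Adj
  sSup (spectrum ℝ (G.adjMatrix ℝ))

open Matrix Finset Pointwise

/-- Rayleigh quotient lower bound for the top of the real spectrum of a symmetric matrix. -/
lemma aux_rayleigh {m : ℕ} [NeZero m] (A : Matrix (Fin m) (Fin m) ℝ) (hA : A.IsHermitian)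
    (x : Fin m → ℝ) : x ⬝ᵥ (A *ᵥ x) ≤ sSup (spectrum ℝ A) * (x ⬝ᵥ x) := by
  have hspec := hA.spectrum_real_eq_range_eigenvalues
  have hbdd : BddAbove (spectrum ℝ A) := by rw [hspec]; exact (Set.finite_range _).bddAbove
  set μ := sSup (spectrum ℝ A) with hμdef
  have hAe : Aᴴ = A := hA
  have hM : (μ • (1 : Matrix (Fin m) (Fin m) ℝ) - A).IsHermitian := by
    show _ = _
    rw [Matrix.conjTranspose_sub, Matrix.conjTranspose_smul, Matrix.conjTranspose_one, hAe,
      star_trivial]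
  have hMspec : spectrum ℝ (μ • (1 : Matrix (Fin m) (Fin m) ℝ) - A)
      = ({μ} : Set ℝ) - spectrum ℝ A := by
    have h1 : (algebraMap ℝ (Matrix (Fin m) (Fin m) ℝ)) μ = μ • 1 :=
      Algebra.algebraMap_eq_smul_one μ
    rw [← h1]
    exact (spectrum.singleton_sub_eq A μ).symm
  have hpsd : (μ • (1 : Matrix (Fin m) (Fin m) ℝ) - A).PosSemidef := by
    rw [hM.posSemidef_iff_eigenvalues_nonneg, Pi.le_def]
    intro i
    have hmem := hM.eigenvalues_mem_spectrum_real i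
    rw [hMspec, Set.singleton_sub] at hmem
    obtain ⟨b, hb, hval⟩ := hmem
    have hble := le_csSup hbdd hb
    rw [← hμdef] at hble
    rw [← hval]
    simp only [Pi.zero_apply]
    linarith
  have h0 := hpsd.dotProduct_mulVec_nonneg x
  rw [star_trivial] at h0
  have hexp : x ⬝ᵥ ((μ • (1 : Matrix (Fin m) (Fin m) ℝ) - A) *ᵥ x)
      = μ * (x ⬝ᵥ x) - x ⬝ᵥ (A *ᵥ x) := by
    rw [Matrix.sub_mulVec, Matrix.smul_mulVec, Matrix.one_mulVec, dotProduct_sub,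
      dotProduct_smul, smul_eq_mul]
  rw [hexp] at h0
  linarith

/-- Upper bound for the top of the real spectrum of a symmetric nonnegative matrix via a
positive super-eigenvector. -/
lemma aux_upper {m : ℕ} [NeZero m] (A : Matrix (Fin m) (Fin m) ℝ) (hA : A.IsHermitian)
    (hpos : ∀ i j, 0 ≤ A i j) (y : Fin m → ℝ) (hy : ∀ i, 0 < y i) (t : ℝ)
    (hty : ∀ i, (A *ᵥ y) i ≤ t * y i) : sSup (spectrum ℝ A) ≤ t := by
  have hspec := hA.spectrum_real_eq_range_eigenvalues
  have hne : (spectrum ℝ A).Nonempty := by rw [hspec]; exact Set.range_nonempty _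
  have hfin : (spectrum ℝ A).Finite := by rw [hspec]; exact Set.finite_range _
  set μ := sSup (spectrum ℝ A) with hμdef
  have hmem : μ ∈ spectrum ℝ A := hne.csSup_mem hfin
  have hEig : Module.End.HasEigenvalue (Matrix.toLin' A) μ := by
    rw [Module.End.hasEigenvalue_iff_mem_spectrum]
    have he : spectrum ℝ (Matrix.toLin' A) = spectrum ℝ A := by
      have h : Matrix.toLin' A = Matrix.toLinAlgEquiv' A := rfl
      rw [h]
      exact AlgEquiv.spectrum_eq Matrix.toLinAlgEquiv' A
    rw [he]; exact hmem
  obtain ⟨v, hv⟩ := hEig.exists_hasEigenvector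
  have hAv : A *ᵥ v = μ • v := by
    have h := hv.apply_eq_smul
    simpa [Matrix.toLin'_apply] using h
  set w : Fin m → ℝ := fun i => |v i| with hwdef
  have hw0 : ∀ i, 0 ≤ w i := fun i => abs_nonneg _
  have hkey : ∀ i, μ * w i ≤ (A *ᵥ w) i := by
    intro i
    have h2 : (A *ᵥ w) i = ∑ j, A i j * |v j| := by
      simp [Matrix.mulVec, dotProduct, hwdef]
    have h3 : |(A *ᵥ v) i| ≤ ∑ j, A i j * |v j| := by
      rw [show (A *ᵥ v) i = ∑ j, A i j * v j from by simp [Matrix.mulVec, dotProduct]]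
      refine (Finset.abs_sum_le_sum_abs _ _).trans ?_
      refine Finset.sum_le_sum fun j _ => ?_
      rw [abs_mul, abs_of_nonneg (hpos i j)]
    have h4 : |(A *ᵥ v) i| = |μ| * |v i| := by rw [hAv]; simp [abs_mul]
    have h5 : μ * w i ≤ |μ| * |v i| := by
      have h6 := le_abs_self μ
      have h7 := abs_nonneg (v i)
      simp only [hwdef]
      nlinarith
    rw [h2]
    linarith [h4 ▸ h3]
  have hAsymm : ∀ i j, A i j = A j i := by
    intro i j
    have hAe : Aᴴ = A := hA
    have h := congrFun (congrFun hAe i) j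
    rw [Matrix.conjTranspose_apply, star_trivial] at h
    exact h.symm
  have hsym : y ⬝ᵥ (A *ᵥ w) = w ⬝ᵥ (A *ᵥ y) := by
    simp only [dotProduct, Matrix.mulVec, Finset.mul_sum]
    rw [Finset.sum_comm]
    refine Finset.sum_congr rfl fun j _ => Finset.sum_congr rfl fun i _ => ?_
    rw [hAsymm i j]; ring
  have h1 : μ * (y ⬝ᵥ w) ≤ y ⬝ᵥ (A *ᵥ w) := by
    calc μ * (y ⬝ᵥ w) = ∑ i, y i * (μ * w i) := by
          rw [dotProduct, Finset.mul_sum]; exact Finset.sum_congr rfl fun i _ => by ring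
      _ ≤ ∑ i, y i * (A *ᵥ w) i :=
          Finset.sum_le_sum fun i _ => mul_le_mul_of_nonneg_left (hkey i) (hy i).le
      _ = y ⬝ᵥ (A *ᵥ w) := by rw [dotProduct]
  have h2 : w ⬝ᵥ (A *ᵥ y) ≤ t * (y ⬝ᵥ w) := by
    calc w ⬝ᵥ (A *ᵥ y) = ∑ i, w i * (A *ᵥ y) i := by rw [dotProduct]
      _ ≤ ∑ i, w i * (t * y i) :=
          Finset.sum_le_sum fun i _ => mul_le_mul_of_nonneg_left (hty i) (hw0 i)
      _ = t * (y ⬝ᵥ w) := by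
          rw [dotProduct, Finset.mul_sum]; exact Finset.sum_congr rfl fun i _ => by ring
  have h3 : 0 < y ⬝ᵥ w := by
    obtain ⟨i, hi⟩ : ∃ i, v i ≠ 0 := by
      by_contra hcon; push_neg at hcon; exact hv.2 (funext hcon)
    rw [dotProduct]
    refine Finset.sum_pos' (fun j _ => mul_nonneg (hy j).le (hw0 j)) ⟨i, Finset.mem_univ i, ?_⟩
    exact mul_pos (hy i) (abs_pos.mpr hi)
  nlinarith [h1, h2, hsym, h3]

lemma aux_sum_split (n : ℕ) (hn : 18 ≤ n) (f : ℕ → ℝ) (c0 c1 c2 c3 : ℝ)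
    (h0 : f 0 = c0)
    (h1 : ∀ k, 1 ≤ k → k < n - 4 → f k = c1)
    (h2 : f (n - 4) = c2)
    (h3 : ∀ k, n - 3 ≤ k → k < n → f k = c3) :
    ∑ k ∈ Finset.range n, f k = c0 + ((n - 5 : ℕ) : ℝ) * c1 + c2 + 3 * c3 := by
  rw [Finset.range_eq_Ico,
    ← Finset.sum_Ico_consecutive f (Nat.zero_le (n - 3)) (by omega : n - 3 ≤ n),
    ← Finset.sum_Ico_consecutive f (Nat.zero_le (n - 4)) (by omega : n - 4 ≤ n - 3),
    ← Finset.sum_Ico_consecutive f (Nat.zero_le 1) (by omega : 1 ≤ n - 4)]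
  have e1 : Finset.Ico 0 1 = {0} := rfl
  have e2 : Finset.Ico (n - 4) (n - 3) = {n - 4} := by
    rw [show n - 3 = (n - 4) + 1 from by omega, Nat.Ico_succ_singleton]
  have s1 : ∑ k ∈ Finset.Ico 1 (n - 4), f k = ((n - 5 : ℕ) : ℝ) * c1 := by
    trans ∑ _k ∈ Finset.Ico 1 (n - 4), c1
    · exact Finset.sum_congr rfl (fun k hk => by
        rw [Finset.mem_Ico] at hk; exact h1 k hk.1 hk.2)
    · rw [Finset.sum_const, Nat.card_Ico, show n - 4 - 1 = n - 5 from by omega, nsmul_eq_mul]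
  have s3 : ∑ k ∈ Finset.Ico (n - 3) n, f k = 3 * c3 := by
    trans ∑ _k ∈ Finset.Ico (n - 3) n, c3
    · exact Finset.sum_congr rfl (fun k hk => by
        rw [Finset.mem_Ico] at hk; exact h3 k hk.1 hk.2)
    · rw [Finset.sum_const, Nat.card_Ico, show n - (n - 3) = 3 from by omega, nsmul_eq_mul]
      norm_num
  rw [e1, e2, Finset.sum_singleton, Finset.sum_singleton, h0, h2, s1, s3]

lemma aux_sum_except (n : ℕ) (f g : ℕ → ℝ) (p : ℕ) (hp : p < n)
    (hagree : ∀ k, k < n → k ≠ p → f k = g k) (hfp : f p = 0) :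
    ∑ k ∈ Finset.range n, f k = (∑ k ∈ Finset.range n, g k) - g p := by
  have hpmem : p ∈ Finset.range n := Finset.mem_range.mpr hp
  rw [← Finset.add_sum_erase _ f hpmem, ← Finset.add_sum_erase _ g hpmem, hfp]
  have he : ∑ k ∈ (Finset.range n).erase p, f k = ∑ k ∈ (Finset.range n).erase p, g k := by
    refine Finset.sum_congr rfl fun k hk => ?_
    rw [Finset.mem_erase, Finset.mem_range] at hk
    exact hagree k hk.2 hk.1
  rw [he]; ring

lemma aux_mulVec_range {n : ℕ} (G : SimpleGraph (Fin n)) [DecidableRel G.Adj]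
    (z : Fin n → ℝ) (i : Fin n) :
    (G.adjMatrix ℝ *ᵥ z) i = ∑ k ∈ Finset.range n,
      (if h : k < n then (if G.Adj i ⟨k, h⟩ then z ⟨k, h⟩ else 0) else 0) := by
  have base : (G.adjMatrix ℝ *ᵥ z) i = ∑ j : Fin n, (if G.Adj i j then z j else 0) := by
    simp [Matrix.mulVec, dotProduct, ite_mul]
  rw [base, ← Fin.sum_univ_eq_sum_range
    (fun k => if h : k < n then (if G.Adj i ⟨k, h⟩ then z ⟨k, h⟩ else 0) else 0) n]
  refine Finset.sum_congr rfl fun j _ => ?_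
  rw [dif_pos j.isLt]

lemma aux_dot_range {n : ℕ} (u w : Fin n → ℝ) :
    u ⬝ᵥ w = ∑ k ∈ Finset.range n, (if h : k < n then u ⟨k, h⟩ * w ⟨k, h⟩ else 0) := by
  rw [dotProduct, ← Fin.sum_univ_eq_sum_range (fun k =>
    if h : k < n then u ⟨k, h⟩ * w ⟨k, h⟩ else 0) n]
  refine Finset.sum_congr rfl fun j _ => ?_
  rw [dif_pos j.isLt]

/-- Row-sum computation for a vertex `i` whose row (off the diagonal) agrees with the
class function `g`. -/
lemma aux_row {n : ℕ} (hn : 18 ≤ n) (G : SimpleGraph (Fin n)) [DecidableRel G.Adj]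
    (z : Fin n → ℝ) (i : Fin n) (g : ℕ → ℝ) (c0 c1 c2 c3 gi : ℝ)
    (hg0 : g 0 = c0) (hg1 : ∀ k, 1 ≤ k → k < n - 4 → g k = c1)
    (hg2 : g (n - 4) = c2) (hg3 : ∀ k, n - 3 ≤ k → k < n → g k = c3)
    (hgi : g i.val = gi)
    (hagree : ∀ (k : ℕ) (hk : k < n), k ≠ i.val →
       (if G.Adj i ⟨k, hk⟩ then z ⟨k, hk⟩ else 0) = g k) :
    (G.adjMatrix ℝ *ᵥ z) i = (c0 + ((n - 5 : ℕ) : ℝ) * c1 + c2 + 3 * c3) - gi := by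
  have hself : ¬ G.Adj i ⟨i.val, i.isLt⟩ := by
    rw [Fin.eta]
    exact G.irrefl
  rw [aux_mulVec_range, aux_sum_except n _ g i.val i.isLt
      (fun k hk hkne => by rw [dif_pos hk]; exact hagree k hk hkne)
      (by rw [dif_pos i.isLt, if_neg hself]),
    aux_sum_split n hn g c0 c1 c2 c3 hg0 hg1 hg2 hg3, hgi]

set_option maxHeartbeats 2000000 in
/-- For `n ≥ 18`, `μ(K_n \ E(S_{n−4} ∪ S_4)) < μ(K_n \ E(S_{n−3}))`. -/
theorem stmt10 (n : ℕ) (hn : 18 ≤ n) :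
    specRad (KnDelSS n) < specRad (KnDelS n) := by
  haveI : NeZero n := ⟨by omega⟩
  letI d1 : DecidableRel (KnDelSS n).Adj := Classical.decRel _
  letI d2 : DecidableRel (KnDelS n).Adj := Classical.decRel _
  show sSup (spectrum ℝ ((KnDelSS n).adjMatrix ℝ)) < sSup (spectrum ℝ ((KnDelS n).adjMatrix ℝ))
  have hadj1 : ∀ (u : Fin n) (k : ℕ) (hk : k < n), ((KnDelSS n).Adj u ⟨k, hk⟩ ↔
      (u.val ≠ k ∧
        ¬(u.val = 0 ∧ 1 ≤ k ∧ k ≤ n - 5) ∧ ¬(u.val = n - 4 ∧ n - 3 ≤ k) ∧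
        ¬(k = 0 ∧ 1 ≤ u.val ∧ u.val ≤ n - 5) ∧ ¬(k = n - 4 ∧ n - 3 ≤ u.val))) := by
    intro u k hk
    simp only [KnDelSS, SimpleGraph.sdiff_adj, SimpleGraph.top_adj, SimpleGraph.fromRel_adj,
      ne_eq, Fin.ext_iff]
    omega
  have hadj2 : ∀ (u : Fin n) (k : ℕ) (hk : k < n), ((KnDelS n).Adj u ⟨k, hk⟩ ↔
      (u.val ≠ k ∧
        ¬(u.val = 0 ∧ 1 ≤ k ∧ k ≤ n - 4) ∧ ¬(k = 0 ∧ 1 ≤ u.val ∧ u.val ≤ n - 4))) := by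
    intro u k hk
    simp only [KnDelS, SimpleGraph.sdiff_adj, SimpleGraph.top_adj, SimpleGraph.fromRel_adj,
      ne_eq, Fin.ext_iff]
    omega
  set N : ℝ := (n : ℝ) with hNdef
  have hN18 : (18 : ℝ) ≤ N := by rw [hNdef]; exact_mod_cast hn
  have hN0 : (0 : ℝ) < N := by linarith
  have hc5 : ((n - 5 : ℕ) : ℝ) = N - 5 := by
    rw [hNdef, Nat.cast_sub (by omega)]; norm_num
  set Y0 : ℝ := 4*N^5 - 9*N^4 - 14*N^3 + 12*N^2 + 2*N - 1 with hY0
  set Y1 : ℝ := N^6 - 4*N^5 - N^4 + 12*N^3 + N^2 - 4*N - 1 with hY1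
  set Y2 : ℝ := N^6 - 7*N^5 + 15*N^4 - 11*N^3 - 11*N^2 - 6*N - 1 with hY2
  set Y3 : ℝ := N^6 - 5*N^5 + 9*N^4 - 3*N^3 - 7*N^2 - 4*N - 1 with hY3
  have hDpos : (0:ℝ) < 5*N^6 - 42*N^5 + 69*N^4 + 24*N^3 + N^2 + 4*N + 1 := by
    nlinarith [pow_pos hN0 4, pow_pos hN0 5, pow_pos hN0 6]
  have hY0pos : 0 < Y0 := by
    rw [hY0]
    nlinarith [pow_pos hN0 3, pow_pos hN0 4, sq_nonneg N, pow_pos hN0 5]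
  have hY1pos : 0 < Y1 := by
    rw [hY1]
    nlinarith [pow_pos hN0 4, pow_pos hN0 5, pow_pos hN0 6, pow_pos hN0 3]
  have hY2pos : 0 < Y2 := by
    rw [hY2]
    nlinarith [pow_pos hN0 4, pow_pos hN0 5, pow_pos hN0 6, pow_pos hN0 3, sq_nonneg N]
  have hY3pos : 0 < Y3 := by
    rw [hY3]
    nlinarith [pow_pos hN0 4, pow_pos hN0 5, pow_pos hN0 6, pow_pos hN0 3, sq_nonneg N]
  set y : Fin n → ℝ := fun j =>
    if j.val = 0 then Y0 else if j.val < n - 4 then Y1 else if j.val = n - 4 then Y2 else Y3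
    with hy
  set x : Fin n → ℝ := fun j => if j.val = 0 then 3 else N with hx
  have hypos : ∀ i, 0 < y i := by
    intro i
    show (0:ℝ) < if i.val = 0 then Y0 else if i.val < n - 4 then Y1
      else if i.val = n - 4 then Y2 else Y3
    split_ifs <;> assumption
  have hYrow : ∀ i : Fin n,
      N * (((KnDelSS n).adjMatrix ℝ) *ᵥ y) i ≤ (N^2 - 2*N - 1) * y i := by
    intro i
    rcases (by omega : i.val = 0 ∨ (1 ≤ i.val ∧ i.val < n - 4) ∨ i.val = n - 4
        ∨ (n - 3 ≤ i.val ∧ i.val < n)) with hc | hc | hc | hc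
    · -- class A : i = 0
      have hyi : y i = Y0 := by
        show (if i.val = 0 then Y0 else if i.val < n - 4 then Y1
          else if i.val = n - 4 then Y2 else Y3) = Y0
        rw [if_pos hc]
      rw [aux_row hn (KnDelSS n) y i
          (fun k => if k = 0 then (0:ℝ) else if k < n - 4 then 0 else if k = n - 4 then Y2 else Y3)
          0 0 Y2 Y3 0
          (by (try simp only []); split_ifs <;> first | rfl | (exfalso; omega))
          (fun k h1 h2 => by (try simp only []); split_ifs <;> first | rfl | (exfalso; omega))
          (by (try simp only []); split_ifs <;> first | rfl | (exfalso; omega))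
          (fun k h1 h2 => by (try simp only []); split_ifs <;> first | rfl | (exfalso; omega))
          (by (try simp only []); split_ifs <;> first | rfl | (exfalso; omega))
          ?_]
      · rw [hyi, hc5]
        nlinarith [hDpos]
      · intro k hk hkne
        by_cases hadj : (KnDelSS n).Adj i ⟨k, hk⟩
        · rw [if_pos hadj]
          rw [hadj1 i k hk] at hadj
          try simp only [Fin.val_mk] at hadj
          try simp only [Fin.val_mk] at hkne
          show (if k = 0 then Y0 else if k < n - 4 then Y1 else if k = n - 4 then Y2 else Y3) = _
          try simp only []
          try split_ifs <;> first | rfl | (exfalso; omega)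
        · rw [if_neg hadj]
          rw [hadj1 i k hk] at hadj
          try simp only [Fin.val_mk] at hadj
          try simp only [Fin.val_mk] at hkne
          try simp only []
          try split_ifs <;> first | rfl | (exfalso; omega)
    · -- class B : 1 ≤ i < n-4
      have hyi : y i = Y1 := by
        show (if i.val = 0 then Y0 else if i.val < n - 4 then Y1
          else if i.val = n - 4 then Y2 else Y3) = Y1
        rw [if_neg (by omega), if_pos (by omega)]
      rw [aux_row hn (KnDelSS n) y i
          (fun k => if k = 0 then (0:ℝ) else if k < n - 4 then Y1 else if k = n - 4 then Y2 else Y3)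
          0 Y1 Y2 Y3 Y1
          (by (try simp only []); split_ifs <;> first | rfl | (exfalso; omega))
          (fun k h1 h2 => by (try simp only []); split_ifs <;> first | rfl | (exfalso; omega))
          (by (try simp only []); split_ifs <;> first | rfl | (exfalso; omega))
          (fun k h1 h2 => by (try simp only []); split_ifs <;> first | rfl | (exfalso; omega))
          (by (try simp only []); split_ifs <;> first | rfl | (exfalso; omega))
          ?_]
      · rw [hyi, hc5, hY1, hY2, hY3]
        nlinarith [hDpos]
      · intro k hk hkne
        by_cases hadj : (KnDelSS n).Adj i ⟨k, hk⟩
        · rw [if_pos hadj]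
          rw [hadj1 i k hk] at hadj
          try simp only [Fin.val_mk] at hadj
          try simp only [Fin.val_mk] at hkne
          show (if k = 0 then Y0 else if k < n - 4 then Y1 else if k = n - 4 then Y2 else Y3) = _
          try simp only []
          try split_ifs <;> first | rfl | (exfalso; omega)
        · rw [if_neg hadj]
          rw [hadj1 i k hk] at hadj
          try simp only [Fin.val_mk] at hadj
          try simp only [Fin.val_mk] at hkne
          try simp only []
          try split_ifs <;> first | rfl | (exfalso; omega)
    · -- class D : i = n-4
      have hyi : y i = Y2 := by
        show (if i.val = 0 then Y0 else if i.val < n - 4 then Y1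
          else if i.val = n - 4 then Y2 else Y3) = Y2
        rw [if_neg (by omega), if_neg (by omega), if_pos hc]
      rw [aux_row hn (KnDelSS n) y i
          (fun k => if k = 0 then Y0 else if k < n - 4 then Y1 else (0:ℝ))
          Y0 Y1 0 0 0
          (by (try simp only []); split_ifs <;> first | rfl | (exfalso; omega))
          (fun k h1 h2 => by (try simp only []); split_ifs <;> first | rfl | (exfalso; omega))
          (by (try simp only []); split_ifs <;> first | rfl | (exfalso; omega))
          (fun k h1 h2 => by (try simp only []); split_ifs <;> first | rfl | (exfalso; omega))
          (by (try simp only []); split_ifs <;> first | rfl | (exfalso; omega))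
          ?_]
      · rw [hyi, hc5, hY0, hY1, hY2]
        nlinarith [hDpos]
      · intro k hk hkne
        by_cases hadj : (KnDelSS n).Adj i ⟨k, hk⟩
        · rw [if_pos hadj]
          rw [hadj1 i k hk] at hadj
          try simp only [Fin.val_mk] at hadj
          try simp only [Fin.val_mk] at hkne
          show (if k = 0 then Y0 else if k < n - 4 then Y1 else if k = n - 4 then Y2 else Y3) = _
          try simp only []
          try split_ifs <;> first | rfl | (exfalso; omega)
        · rw [if_neg hadj]
          rw [hadj1 i k hk] at hadj
          try simp only [Fin.val_mk] at hadj
          try simp only [Fin.val_mk] at hkne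
          try simp only []
          try split_ifs <;> first | rfl | (exfalso; omega)
    · -- class C : n-3 ≤ i
      have hyi : y i = Y3 := by
        show (if i.val = 0 then Y0 else if i.val < n - 4 then Y1
          else if i.val = n - 4 then Y2 else Y3) = Y3
        rw [if_neg (by omega), if_neg (by omega), if_neg (by omega)]
      rw [aux_row hn (KnDelSS n) y i
          (fun k => if k = 0 then Y0 else if k < n - 4 then Y1 else if k = n - 4 then (0:ℝ) else Y3)
          Y0 Y1 0 Y3 Y3
          (by (try simp only []); split_ifs <;> first | rfl | (exfalso; omega))
          (fun k h1 h2 => by (try simp only []); split_ifs <;> first | rfl | (exfalso; omega))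
          (by (try simp only []); split_ifs <;> first | rfl | (exfalso; omega))
          (fun k h1 h2 => by (try simp only []); split_ifs <;> first | rfl | (exfalso; omega))
          (by (try simp only []); split_ifs <;> first | rfl | (exfalso; omega))
          ?_]
      · rw [hyi, hc5, hY0, hY1, hY3]
        nlinarith [hDpos]
      · intro k hk hkne
        by_cases hadj : (KnDelSS n).Adj i ⟨k, hk⟩
        · rw [if_pos hadj]
          rw [hadj1 i k hk] at hadj
          try simp only [Fin.val_mk] at hadj
          try simp only [Fin.val_mk] at hkne
          show (if k = 0 then Y0 else if k < n - 4 then Y1 else if k = n - 4 then Y2 else Y3) = _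
          try simp only []
          try split_ifs <;> first | rfl | (exfalso; omega)
        · rw [if_neg hadj]
          rw [hadj1 i k hk] at hadj
          try simp only [Fin.val_mk] at hadj
          try simp only [Fin.val_mk] at hkne
          try simp only []
          try split_ifs <;> first | rfl | (exfalso; omega)
  have hHerm1 : ((KnDelSS n).adjMatrix ℝ).IsHermitian := by
    show _ = _
    rw [Matrix.conjTranspose_eq_transpose_of_trivial]
    exact SimpleGraph.isSymm_adjMatrix _
  have hHerm2 : ((KnDelS n).adjMatrix ℝ).IsHermitian := by
    show _ = _
    rw [Matrix.conjTranspose_eq_transpose_of_trivial]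
    exact SimpleGraph.isSymm_adjMatrix _
  have hpos1 : ∀ i j, 0 ≤ ((KnDelSS n).adjMatrix ℝ) i j := by
    intro i j
    rw [SimpleGraph.adjMatrix_apply]
    split_ifs <;> norm_num
  have hub : sSup (spectrum ℝ ((KnDelSS n).adjMatrix ℝ)) ≤ (N^2 - 2*N - 1) / N := by
    refine aux_upper _ hHerm1 hpos1 y hypos _ (fun i => ?_)
    rw [div_mul_eq_mul_div, le_div_iff₀ hN0]
    have h := hYrow i
    linarith
  have hXrow : ∀ (k0 : ℕ) (hk0 : k0 < n),
      (((KnDelS n).adjMatrix ℝ) *ᵥ x) ⟨k0, hk0⟩ =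
        if k0 = 0 then 3*N else if k0 < n - 3 then (N-2)*N else 3 + (N-2)*N := by
    intro k0 hk0
    rcases (by omega : k0 = 0 ∨ (1 ≤ k0 ∧ k0 < n - 3) ∨ (n - 3 ≤ k0 ∧ k0 < n)) with hc | hc | hc
    · rw [if_pos hc]
      rw [aux_row hn (KnDelS n) x ⟨k0, hk0⟩
          (fun k => if k = 0 then (0:ℝ) else if k < n - 4 then 0 else if k = n - 4 then 0 else N)
          0 0 0 N 0
          (by (try simp only []); split_ifs <;> first | rfl | (exfalso; omega))
          (fun k h1 h2 => by (try simp only []); split_ifs <;> first | rfl | (exfalso; omega))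
          (by (try simp only []); split_ifs <;> first | rfl | (exfalso; omega))
          (fun k h1 h2 => by (try simp only []); split_ifs <;> first | rfl | (exfalso; omega))
          (by simp only [Fin.val_mk]; split_ifs <;> first | rfl | (exfalso; omega))
          ?_]
      · ring
      · intro k hk hkne
        by_cases hadj : (KnDelS n).Adj ⟨k0, hk0⟩ ⟨k, hk⟩
        · rw [if_pos hadj]
          try rw [hadj2 ⟨k0, hk0⟩ k hk] at hadj
          try simp only [Fin.val_mk] at hadj
          try simp only [Fin.val_mk] at hkne
          try show (if k = 0 then (3:ℝ) else N) = _
          try simp only []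
          try split_ifs <;> first | rfl | (exfalso; omega)
        · rw [if_neg hadj]
          try rw [hadj2 ⟨k0, hk0⟩ k hk] at hadj
          try simp only [Fin.val_mk] at hadj
          try simp only [Fin.val_mk] at hkne
          try simp only []
          try split_ifs <;> first | rfl | (exfalso; omega)
    · rw [if_neg (by omega), if_pos (by omega)]
      rw [aux_row hn (KnDelS n) x ⟨k0, hk0⟩
          (fun k => if k = 0 then (0:ℝ) else N)
          0 N N N N
          (by (try simp only []); split_ifs <;> first | rfl | (exfalso; omega))
          (fun k h1 h2 => by (try simp only []); split_ifs <;> first | rfl | (exfalso; omega))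
          (by (try simp only []); split_ifs <;> first | rfl | (exfalso; omega))
          (fun k h1 h2 => by (try simp only []); split_ifs <;> first | rfl | (exfalso; omega))
          (by simp only [Fin.val_mk]; split_ifs <;> first | rfl | (exfalso; omega))
          ?_]
      · rw [hc5]; ring
      · intro k hk hkne
        by_cases hadj : (KnDelS n).Adj ⟨k0, hk0⟩ ⟨k, hk⟩
        · rw [if_pos hadj]
          try rw [hadj2 ⟨k0, hk0⟩ k hk] at hadj
          try simp only [Fin.val_mk] at hadj
          try simp only [Fin.val_mk] at hkne
          try show (if k = 0 then (3:ℝ) else N) = _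
          try simp only []
          try split_ifs <;> first | rfl | (exfalso; omega)
        · rw [if_neg hadj]
          try rw [hadj2 ⟨k0, hk0⟩ k hk] at hadj
          try simp only [Fin.val_mk] at hadj
          try simp only [Fin.val_mk] at hkne
          try simp only []
          try split_ifs <;> first | rfl | (exfalso; omega)
    · rw [if_neg (by omega), if_neg (by omega)]
      rw [aux_row hn (KnDelS n) x ⟨k0, hk0⟩
          (fun k => if k = 0 then (3:ℝ) else N)
          3 N N N N
          (by (try simp only []); split_ifs <;> first | rfl | (exfalso; omega))
          (fun k h1 h2 => by (try simp only []); split_ifs <;> first | rfl | (exfalso; omega))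
          (by (try simp only []); split_ifs <;> first | rfl | (exfalso; omega))
          (fun k h1 h2 => by (try simp only []); split_ifs <;> first | rfl | (exfalso; omega))
          (by simp only [Fin.val_mk]; split_ifs <;> first | rfl | (exfalso; omega))
          ?_]
      · rw [hc5]; ring
      · intro k hk hkne
        by_cases hadj : (KnDelS n).Adj ⟨k0, hk0⟩ ⟨k, hk⟩
        · rw [if_pos hadj]
          try rw [hadj2 ⟨k0, hk0⟩ k hk] at hadj
          try simp only [Fin.val_mk] at hadj
          try simp only [Fin.val_mk] at hkne
          try show (if k = 0 then (3:ℝ) else N) = _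
          try simp only []
          try split_ifs <;> first | rfl | (exfalso; omega)
        · rw [if_neg hadj]
          try rw [hadj2 ⟨k0, hk0⟩ k hk] at hadj
          try simp only [Fin.val_mk] at hadj
          try simp only [Fin.val_mk] at hkne
          try simp only []
          try split_ifs <;> first | rfl | (exfalso; omega)
  have hxx : x ⬝ᵥ x = 9 + (N-1)*N^2 := by
    rw [aux_dot_range, aux_sum_split n hn _ 9 (N*N) (N*N) (N*N)
      (by rw [dif_pos (by omega : (0:ℕ) < n)]
          show (if (0:ℕ) = 0 then (3:ℝ) else N) * (if (0:ℕ) = 0 then (3:ℝ) else N) = 9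
          norm_num)
      (fun k h1 h2 => by
          rw [dif_pos (by omega : k < n)]
          show (if k = 0 then (3:ℝ) else N) * (if k = 0 then (3:ℝ) else N) = N*N
          rw [if_neg (by omega)])
      (by rw [dif_pos (by omega : n - 4 < n)]
          show (if n - 4 = 0 then (3:ℝ) else N) * (if n - 4 = 0 then (3:ℝ) else N) = N*N
          rw [if_neg (by omega)])
      (fun k h1 h2 => by
          rw [dif_pos (by omega : k < n)]
          show (if k = 0 then (3:ℝ) else N) * (if k = 0 then (3:ℝ) else N) = N*N
          rw [if_neg (by omega)]), hc5]
    ring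
  have hxAx : x ⬝ᵥ (((KnDelS n).adjMatrix ℝ) *ᵥ x) = 18*N + N^2*(N-2)*(N-1) := by
    rw [aux_dot_range, aux_sum_split n hn _ (3*(3*N)) (N*((N-2)*N)) (N*((N-2)*N))
        (N*(3+(N-2)*N))
      (by rw [dif_pos (by omega : (0:ℕ) < n), hXrow 0 (by omega)]
          show (if (0:ℕ) = 0 then (3:ℝ) else N) *
            (if (0:ℕ) = 0 then 3*N else if (0:ℕ) < n - 3 then (N-2)*N else 3 + (N-2)*N)
            = 3*(3*N)
          norm_num)
      (fun k h1 h2 => by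
          rw [dif_pos (by omega : k < n), hXrow k (by omega)]
          show (if k = 0 then (3:ℝ) else N) *
            (if k = 0 then 3*N else if k < n - 3 then (N-2)*N else 3 + (N-2)*N) = N*((N-2)*N)
          rw [if_neg (by omega), if_neg (by omega), if_pos (by omega)])
      (by rw [dif_pos (by omega : n - 4 < n), hXrow (n-4) (by omega)]
          show (if n - 4 = 0 then (3:ℝ) else N) *
            (if n - 4 = 0 then 3*N else if n - 4 < n - 3 then (N-2)*N else 3 + (N-2)*N)
            = N*((N-2)*N)
          rw [if_neg (by omega), if_neg (by omega), if_pos (by omega)])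
      (fun k h1 h2 => by
          rw [dif_pos (by omega : k < n), hXrow k (by omega)]
          show (if k = 0 then (3:ℝ) else N) *
            (if k = 0 then 3*N else if k < n - 3 then (N-2)*N else 3 + (N-2)*N)
            = N*(3+(N-2)*N)
          rw [if_neg (by omega), if_neg (by omega), if_neg (by omega)]), hc5]
    ring
  have hxxpos : 0 < x ⬝ᵥ x := by rw [hxx]; nlinarith
  have hray := aux_rayleigh _ hHerm2 x
  have hgap : (N^2 - 2*N - 1) / N * (x ⬝ᵥ x) < x ⬝ᵥ (((KnDelS n).adjMatrix ℝ) *ᵥ x) := by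
    rw [hxx, hxAx, div_mul_eq_mul_div, div_lt_iff₀ hN0]
    nlinarith
  have hlb : (N^2 - 2*N - 1) / N < sSup (spectrum ℝ ((KnDelS n).adjMatrix ℝ)) := by
    by_contra hcon
    push_neg at hcon
    have hmul := mul_le_mul_of_nonneg_right hcon hxxpos.le
    linarith
  exact lt_of_le_of_lt hub hlb
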